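/- Let G be a d-regular graph on n vertices and let p ≤ 2/d. Form G_p by retaining each edge independently with probability p. Then with high probability, every vertex subset S with |S| = k ≥ ln n that spans a connected subgraph of G_p satisfies e_{G_p}(S) + e_{G_p}(S, Sᶜ) < 10k, i.e., the total number of edges of G_p incident to S is less than 10|S|. -/

import Mathlib

open MeasureTheory Filter Real

section Defs

variable {V : Type*}

def SimpleGraph.percGraph (G : SimpleGraph V) [DecidableRel G.Adj]
    (ω : Sym2 V → Bool) : SimpleGraph V where
  Adj u v := G.Adj u v ∧ ω s(u, v) = true
  symm.symm u v h := ⟨h.1.symm, by rw [Sym2.eq_swap]; exact h.2⟩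
  loopless.irrefl v h := G.loopless.irrefl v h.1

instance {G : SimpleGraph V} [DecidableRel G.Adj] {ω : Sym2 V → Bool} :
    DecidableRel (G.percGraph ω).Adj := fun u v =>
  inferInstanceAs (Decidable (G.Adj u v ∧ ω s(u, v) = true))

noncomputable def percMeasure (V : Type*) [Fintype V] [DecidableEq V] (p : ℝ) :
    Measure (Sym2 V → Bool) :=
  Measure.pi fun _ => (PMF.bernoulli (min (Real.toNNReal p) 1) (min_le_right _ _)).toMeasure

def IsNDLGraph [Fintype V] (G : SimpleGraph V) [DecidableRel G.Adj] (d : ℕ) (lam : ℝ) : Prop :=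
  G.IsRegularOfDegree d ∧
  ∀ f : V → ℝ, (∑ v, f v = 0) →
    ∑ v, ((G.adjMatrix ℝ).mulVec f v) ^ 2 ≤ lam ^ 2 * ∑ v, (f v) ^ 2

def epairs [Fintype V] (H : SimpleGraph V) [DecidableRel H.Adj] (A B : Finset V) : ℕ :=
  ∑ a ∈ A, ∑ b ∈ B, if H.Adj a b then 1 else 0

def extNbhd [Fintype V] [DecidableEq V] (H : SimpleGraph V) [DecidableRel H.Adj]
    (S : Finset V) : Finset V :=
  Finset.univ.filter fun v => v ∉ S ∧ ∃ u ∈ S, H.Adj u v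

def IsLargestComponent (H : SimpleGraph V) (K : Set V) : Prop :=
  (∃ C : H.ConnectedComponent, K = C.supp) ∧
  ∀ C' : H.ConnectedComponent, C'.supp.ncard ≤ K.ncard

noncomputable def gball [Fintype V] (H : SimpleGraph V) (v : V) (r : ℕ) : Finset V :=
  Finset.univ.filter fun u => H.dist v u ≤ r

end Defs

set_option linter.unusedSectionVars false
set_option maxHeartbeats 2000000
open Finset
open scoped ENNReal

section Count

lemma countP_eq_card_filter {α : Type*} [DecidableEq α] (p : α → Bool) :
    ∀ l : List α, l.Nodup → l.countP p = (l.toFinset.filter (fun a => p a = true)).card := by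
  intro l
  induction l with
  | nil => intro _; simp
  | cons a l ih =>
    intro hn
    rcases List.nodup_cons.mp hn with ⟨ha, hn'⟩
    have hnotmem : a ∉ l.toFinset.filter (fun a => p a = true) := by
      simp only [mem_filter, List.mem_toFinset]; tauto
    by_cases hpa : p a
    · rw [List.countP_cons_of_pos hpa, ih hn', List.toFinset_cons, filter_insert, if_pos hpa,
        card_insert_of_notMem hnotmem]
    · rw [List.countP_cons_of_neg (p := p) (a := a) (l := l) (by simpa using hpa), ih hn', List.toFinset_cons,
        filter_insert, if_neg (by simpa using hpa)]

lemma countP_ofFn {N : ℕ} {α : Type*} (m : Fin N → α) (p : α → Bool) :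
    (List.ofFn m).countP p = (univ.filter (fun i => p (m i) = true)).card := by
  classical
  rw [List.ofFn_eq_map, List.countP_map,
    countP_eq_card_filter _ _ (List.nodup_finRange N)]
  rw [List.toFinset_finRange]
  rfl

/-- the number of codes with exactly `r` advance-moves -/
lemma codes_card_le (N r d : ℕ) :
    (((univ : Finset (Fin N → Option (Fin d)))).filter
      (fun m => (univ.filter fun i => (m i).isSome = true).card = r)).card
      ≤ N.choose r * d ^ r := by
  classical
  rcases Nat.eq_zero_or_pos d with rfl | hd
  · -- no advance moves possible
    have hnone : ∀ (m : Fin N → Option (Fin 0)) (i : Fin N), m i = none := by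
      intro m i
      match h : m i with
      | none => rfl
      | some j => exact j.elim0
    rcases Nat.eq_zero_or_pos r with rfl | hr
    · calc _ ≤ (univ : Finset (Fin N → Option (Fin 0))).card := card_le_card (filter_subset _ _)
        _ = 1 := by
            rw [card_univ]
            simp [Fintype.card_fun]
        _ ≤ _ := by simp [Nat.one_le_iff_ne_zero, Nat.choose_self]
    · have : ((univ : Finset (Fin N → Option (Fin 0)))).filter
          (fun m => (univ.filter fun i => (m i).isSome = true).card = r) = ∅ := by
        apply filter_eq_empty_iff.mpr
        intro m _
        have : (univ.filter fun i => (m i).isSome = true) = ∅ := by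
          apply filter_eq_empty_iff.mpr
          intro i _
          simp [hnone m i]
        simp [this]
        omega
      rw [this]
      exact Nat.zero_le _
  · -- main case
    set A := (((univ : Finset (Fin N → Option (Fin d)))).filter
      (fun m => (univ.filter fun i => (m i).isSome = true).card = r)) with hA
    have hmap : ∀ m ∈ A, (univ.filter fun i => (m i).isSome = true) ∈
        (univ : Finset (Fin N)).powersetCard r := by
      intro m hm
      rw [mem_powersetCard]
      exact ⟨subset_univ _, (mem_filter.mp hm).2⟩
    rw [card_eq_sum_card_fiberwise hmap]
    have hfib : ∀ s ∈ (univ : Finset (Fin N)).powersetCard r,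
        (A.filter fun m => (univ.filter fun i => (m i).isSome = true) = s).card ≤ d ^ r := by
      intro s hs
      have hscard : s.card = r := (mem_powersetCard.mp hs).2
      have hinj : ∀ m ∈ (A.filter fun m => (univ.filter fun i => (m i).isSome = true) = s),
          (fun i (_ : i ∈ s) => (m i).getD ⟨0, hd⟩) ∈ s.pi (fun _ => (univ : Finset (Fin d))) := by
        intro m _
        rw [Finset.mem_pi]
        intro i _
        exact mem_univ _
      calc (A.filter fun m => (univ.filter fun i => (m i).isSome = true) = s).card
          ≤ (s.pi (fun _ => (univ : Finset (Fin d)))).card := by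
            apply card_le_card_of_injOn _ hinj
            intro m₁ hm₁ m₂ hm₂ heq
            have h₁ := (mem_filter.mp hm₁).2
            have h₂ := (mem_filter.mp hm₂).2
            funext i
            by_cases hi : i ∈ s
            · have hs₁ : (m₁ i).isSome := by
                have := hi; rw [← h₁] at this
                exact of_decide_eq_true (by simpa using (mem_filter.mp this).2)
              have hs₂ : (m₂ i).isSome := by
                have := hi; rw [← h₂] at this
                exact of_decide_eq_true (by simpa using (mem_filter.mp this).2)
              have := congrFun (congrFun heq i) hi
              simp only at this
              rcases Option.isSome_iff_exists.mp hs₁ with ⟨a₁, ha₁⟩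
              rcases Option.isSome_iff_exists.mp hs₂ with ⟨a₂, ha₂⟩
              rw [ha₁, ha₂] at this ⊢
              simpa using this
            · have hs₁ : m₁ i = none := by
                rw [← Option.not_isSome_iff_eq_none]
                intro hcon
                exact hi (by rw [← h₁]; simp [hcon])
              have hs₂ : m₂ i = none := by
                rw [← Option.not_isSome_iff_eq_none]
                intro hcon
                exact hi (by rw [← h₂]; simp [hcon])
              rw [hs₁, hs₂]
        _ = d ^ r := by
            rw [card_pi]
            simp [hscard]
    calc ∑ s ∈ (univ : Finset (Fin N)).powersetCard r, _ ≤
        ∑ s ∈ (univ : Finset (Fin N)).powersetCard r, d ^ r := sum_le_sum hfib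
      _ = N.choose r * d ^ r := by
          rw [sum_const, smul_eq_mul, card_powersetCard, card_univ, Fintype.card_fin]

lemma choose_le_two_pow' (n k : ℕ) : n.choose k ≤ 2 ^ n := by
  rcases le_or_gt k n with h | h
  · calc n.choose k ≤ ∑ m ∈ Finset.range (n + 1), n.choose m :=
        single_le_sum (fun _ _ => Nat.zero_le _) (mem_range.mpr (by omega))
      _ = 2 ^ n := Nat.sum_range_choose n
  · rw [Nat.choose_eq_zero_of_lt h]; exact Nat.zero_le _

end Count

section Cyl
variable {V : Type*} [Fintype V] [DecidableEq V]

lemma measurableSet_all (s : Set (Sym2 V → Bool)) : MeasurableSet s := by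
  have hsing : ∀ f : Sym2 V → Bool, MeasurableSet ({f} : Set (Sym2 V → Bool)) := by
    intro f
    have : ({f} : Set (Sym2 V → Bool)) = ⋂ e, (fun ω => ω e) ⁻¹' {f e} := by
      ext g; simp [funext_iff]
    rw [this]
    exact MeasurableSet.iInter fun e => (measurable_pi_apply e) (measurableSet_singleton _)
  have : s = ⋃ f ∈ s, {f} := by simp
  rw [this]
  exact MeasurableSet.biUnion (Set.to_countable s) fun f _ => hsing f

instance : IsProbabilityMeasure (percMeasure V p) := by
  unfold percMeasure
  infer_instance

lemma percMeasure_cyl (p : ℝ) (D : Finset (Sym2 V)) :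
    percMeasure V p {ω : Sym2 V → Bool | ∀ e ∈ D, ω e = true} =
      (min (ENNReal.ofReal p) 1) ^ D.card := by
  set q := min (ENNReal.ofReal p) 1 with hq
  have hqq : ((min (Real.toNNReal p) 1 : NNReal) : ℝ≥0∞) = q := rfl
  have hset : {ω : Sym2 V → Bool | ∀ e ∈ D, ω e = true} =
      Set.pi Set.univ (fun e => if e ∈ D then ({true} : Set Bool) else Set.univ) := by
    ext ω
    simp only [Set.mem_setOf_eq, Set.mem_pi, Set.mem_univ, forall_true_left]
    constructor
    · intro h e
      by_cases he : e ∈ D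
      · simp [he, h e he]
      · simp [he]
    · intro h e he
      have := h e
      simpa [he] using this
  rw [hset, percMeasure, Measure.pi_pi]
  have hval : ∀ e : Sym2 V,
      (PMF.bernoulli (min (Real.toNNReal p) 1) (min_le_right _ _)).toMeasure
        (if e ∈ D then ({true} : Set Bool) else Set.univ) = if e ∈ D then q else 1 := by
    intro e
    by_cases he : e ∈ D
    · simp only [he, if_true]
      rw [PMF.toMeasure_apply_singleton _ _ (measurableSet_singleton _)]
      exact Eq.trans rfl hqq
    · simp only [he, if_false]
      rw [measure_univ]
  calc ∏ e : Sym2 V, (PMF.bernoulli (min (Real.toNNReal p) 1) (min_le_right _ _)).toMeasure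
        (if e ∈ D then ({true} : Set Bool) else Set.univ)
      = ∏ e : Sym2 V, (if e ∈ D then q else 1) := Finset.prod_congr rfl (fun e _ => hval e)
    _ = ∏ e ∈ univ ∩ D, q := Finset.prod_ite_mem univ D fun _ => q
    _ = q ^ D.card := by rw [Finset.univ_inter, Finset.prod_const]

end Cyl

section Run
variable {V : Type*} {d : ℕ}

structure DSt (V : Type*) where
  cur : V
  stack : List V
  es : List (Sym2 V)
  vs : List V

variable (nbr : V → Fin d → V)

def runStep (s : DSt V) : Option (Fin d) → DSt V
  | some j => ⟨nbr s.cur j, s.cur :: s.stack, s(s.cur, nbr s.cur j) :: s.es, nbr s.cur j :: s.vs⟩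
  | none =>
    match s.stack with
    | [] => s
    | x :: st => ⟨x, st, s.es, x :: s.vs⟩

def runCode (s : DSt V) (c : List (Option (Fin d))) : DSt V := c.foldl (runStep nbr) s

@[simp] lemma runCode_nil (s : DSt V) : runCode nbr s [] = s := rfl

@[simp] lemma runCode_cons (s : DSt V) (o : Option (Fin d)) (c : List (Option (Fin d))) :
    runCode nbr s (o :: c) = runCode nbr (runStep nbr s o) c := rfl

lemma runCode_append (s : DSt V) (c₁ c₂ : List (Option (Fin d))) :
    runCode nbr s (c₁ ++ c₂) = runCode nbr (runCode nbr s c₁) c₂ :=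
  List.foldl_append ..

lemma runCode_factor (c : List (Option (Fin d))) :
    ∀ (a : V) (st : List V) (es : List (Sym2 V)) (vs : List V),
    runCode nbr ⟨a, st, es, vs⟩ c =
      ⟨(runCode nbr ⟨a, st, [], []⟩ c).cur, (runCode nbr ⟨a, st, [], []⟩ c).stack,
        (runCode nbr ⟨a, st, [], []⟩ c).es ++ es, (runCode nbr ⟨a, st, [], []⟩ c).vs ++ vs⟩ := by
  induction c with
  | nil => intro a st es vs; simp
  | cons o c ih =>
    intro a st es vs
    match o with
    | some j =>
      simp only [runCode_cons, runStep]
      rw [ih, ih (nbr a j) (a :: st) (s(a, nbr a j) :: []) ([nbr a j])]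
      simp
    | none =>
      match st with
      | [] =>
        simp only [runCode_cons, runStep]
        exact ih a [] es vs
      | x :: st' =>
        simp only [runCode_cons, runStep]
        rw [ih, ih x st' [] [x]]
        simp

lemma mem_vs_prefix (c : List (Option (Fin d))) :
    ∀ (s : DSt V) (z : V), z ∈ (runCode nbr s c).vs →
      z ∈ s.vs ∨ ∃ c₁ c₂, c = c₁ ++ c₂ ∧ (runCode nbr s c₁).cur = z := by
  induction c with
  | nil => intro s z h; exact Or.inl h
  | cons o c ih =>
    intro s z h
    rcases ih (runStep nbr s o) z h with h' | ⟨c₁, c₂, rfl, hc⟩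
    · match o, s with
      | some j, ⟨a, st, es, vs⟩ =>
        simp only [runStep, List.mem_cons] at h'
        rcases h' with rfl | h'
        · exact Or.inr ⟨[some j], c, rfl, rfl⟩
        · exact Or.inl h'
      | none, ⟨a, [], es, vs⟩ => exact Or.inl h'
      | none, ⟨a, x :: st, es, vs⟩ =>
        simp only [runStep, List.mem_cons] at h'
        rcases h' with rfl | h'
        · exact Or.inr ⟨[none], c, rfl, rfl⟩
        · exact Or.inl h'
    · exact Or.inr ⟨o :: c₁, c₂, rfl, hc⟩

end Run

section Graph
variable {V : Type*} [Fintype V] [DecidableEq V]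

/-- the graph `H` restricted to vertices in `S`, as a graph on `V` -/
def auxg (H : SimpleGraph V) (S : Finset V) : SimpleGraph V where
  Adj x y := H.Adj x y ∧ x ∈ S ∧ y ∈ S
  symm.symm := fun x y ⟨h, hx, hy⟩ => ⟨h.symm, hy, hx⟩
  loopless.irrefl := fun x h => H.loopless.irrefl x h.1

lemma auxg_support_subset {H : SimpleGraph V} {S : Finset V} :
    ∀ {x y : V} (w : (auxg H S).Walk x y), x ∈ S → ∀ z ∈ w.support, z ∈ S := by
  intro x y w
  induction w with
  | nil => intro hx z hz; simp at hz; subst hz; exact hx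
  | cons h w ih =>
    intro hx z hz
    simp only [SimpleGraph.Walk.support_cons, List.mem_cons] at hz
    rcases hz with rfl | hz
    · exact hx
    · exact ih h.2.2 z hz

lemma auxg_transfer {H : SimpleGraph V} {S T : Finset V} :
    ∀ {x y : V} (w : (auxg H S).Walk x y), (∀ z ∈ w.support, z ∈ T) →
      (auxg H T).Reachable x y := by
  intro x y w
  induction w with
  | nil => intro _; exact SimpleGraph.Reachable.refl _
  | @cons a b c h w ih =>
    intro hT
    have hab : (auxg H T).Adj a b := by
      refine ⟨h.1, hT a ?_, hT b ?_⟩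
      · simp [SimpleGraph.Walk.support_cons]
      · simp [SimpleGraph.Walk.support_cons, SimpleGraph.Walk.start_mem_support]
    exact (SimpleGraph.Adj.reachable hab).trans
      (ih fun z hz => hT z (by simp [SimpleGraph.Walk.support_cons, hz]))

lemma induced_to_aux {H : SimpleGraph V} {S : Finset V}
    (hconn : (SimpleGraph.induce (↑S : Set V) H).Connected) :
    ∀ x ∈ S, ∀ y ∈ S, (auxg H S).Reachable x y := by
  intro x hx y hy
  have hr := hconn.preconnected ⟨x, by simpa using hx⟩ ⟨y, by simpa using hy⟩
  exact hr.map ⟨Subtype.val, by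
      rintro ⟨a, ha⟩ ⟨b, hb⟩ hab
      exact ⟨by simpa using hab, by simpa using ha, by simpa using hb⟩⟩

lemma exists_noncut {H : SimpleGraph V} {S : Finset V} (hS : 2 ≤ S.card) {v : V} (hv : v ∈ S)
    (hconn : ∀ x ∈ S, ∀ y ∈ S, (auxg H S).Reachable x y) :
    ∃ u ∈ S, u ≠ v ∧
      (∀ x ∈ S.erase u, ∀ y ∈ S.erase u, (auxg H (S.erase u)).Reachable x y) ∧
      ∃ x ∈ S.erase u, H.Adj x u := by
  classical
  set K := auxg H S with hK
  have hne : (S.erase v).Nonempty := by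
    rw [← Finset.card_pos, Finset.card_erase_of_mem hv]; omega
  obtain ⟨u, hu, hmax⟩ := Finset.exists_max_image (S.erase v) (fun x => K.dist v x) hne
  obtain ⟨huv, huS⟩ := Finset.mem_erase.mp hu
  have hreachv : ∀ x ∈ S, x ≠ u → (auxg H (S.erase u)).Reachable v x := by
    intro x hx hxu
    rcases eq_or_ne x v with rfl | hxv
    · exact SimpleGraph.Reachable.refl _
    obtain ⟨w, hw⟩ := (hconn v hv x hx).exists_walk_length_eq_dist
    have husupp : u ∉ w.support := by
      intro hmem
      have h1 : K.dist v u ≤ (w.takeUntil u hmem).length := SimpleGraph.dist_le _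
      have h2 := congrArg SimpleGraph.Walk.length (w.take_spec hmem)
      rw [SimpleGraph.Walk.length_append] at h2
      have h3 : K.dist v x ≤ K.dist v u := hmax x (Finset.mem_erase.mpr ⟨hxv, hx⟩)
      have h4 : (w.dropUntil u hmem).length = 0 := by omega
      exact hxu (SimpleGraph.Walk.eq_of_length_eq_zero h4).symm
    have hsupp : ∀ z ∈ w.support, z ∈ S.erase u := by
      intro z hz
      refine Finset.mem_erase.mpr ⟨?_, auxg_support_subset w hv z hz⟩
      rintro rfl; exact husupp hz
    exact auxg_transfer w hsupp
  refine ⟨u, huS, huv, ?_, ?_⟩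
  · intro x hx y hy
    have hx' := Finset.mem_erase.mp hx
    have hy' := Finset.mem_erase.mp hy
    exact ((hreachv x hx'.2 hx'.1).symm).trans (hreachv y hy'.2 hy'.1)
  · obtain ⟨w⟩ := hconn v hv u huS
    have key : ∀ (a : V) (w' : K.Walk a v), a = u → ∃ x ∈ S.erase u, H.Adj x u := by
      intro a w'
      induction w' with
      | nil => intro h; exact absurd h.symm huv
      | @cons a b c h w'' ih =>
        intro heq
        have h' : K.Adj u b := heq ▸ h
        refine ⟨b, Finset.mem_erase.mpr ⟨fun hbu => ?_, h'.2.2⟩, h'.1.symm⟩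
        exact K.loopless.irrefl u (by rwa [hbu] at h')
    exact key u w.reverse rfl
end Graph
section Tour
variable {V : Type*} [Fintype V] [DecidableEq V] {d : ℕ}
variable {G : SimpleGraph V} [DecidableRel G.Adj]

noncomputable def nbrF (hreg : G.IsRegularOfDegree d) (v : V) (j : Fin d) : V :=
  ((G.neighborFinset v).equivFin.symm (Fin.cast (hreg v).symm j) : V)

lemma nbrF_adj (hreg : G.IsRegularOfDegree d) (v : V) (j : Fin d) :
    G.Adj v (nbrF hreg v j) := by
  have := ((G.neighborFinset v).equivFin.symm (Fin.cast (hreg v).symm j)).2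
  rwa [SimpleGraph.mem_neighborFinset] at this

lemma nbrF_surj (hreg : G.IsRegularOfDegree d) {v u : V} (h : G.Adj v u) :
    ∃ j : Fin d, nbrF hreg v j = u := by
  refine ⟨Fin.cast (hreg v)
    ((G.neighborFinset v).equivFin ⟨u, by rwa [SimpleGraph.mem_neighborFinset]⟩), ?_⟩
  simp [nbrF]
  exact congrArg Subtype.val (Equiv.symm_apply_apply _ _)

lemma tour_exists (hreg : G.IsRegularOfDegree d) (H : SimpleGraph V)
    (hle : ∀ a b, H.Adj a b → G.Adj a b) :
    ∀ (k : ℕ) (S : Finset V), S.card = k →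
      (∀ x ∈ S, ∀ y ∈ S, (auxg H S).Reachable x y) →
      ∀ v ∈ S,
      ∃ c : List (Option (Fin d)),
        (runCode (nbrF hreg) ⟨v, [], [], [v]⟩ c).cur = v ∧
        (runCode (nbrF hreg) ⟨v, [], [], [v]⟩ c).stack = [] ∧
        (runCode (nbrF hreg) ⟨v, [], [], [v]⟩ c).vs.toFinset = S ∧
        (∀ e ∈ (runCode (nbrF hreg) ⟨v, [], [], [v]⟩ c).es,
          e ∈ H.edgeSet ∧ ∀ z ∈ e, z ∈ S) ∧
        (runCode (nbrF hreg) ⟨v, [], [], [v]⟩ c).es.toFinset.card = k - 1 ∧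
        c.length = 2 * (k - 1) ∧
        c.countP Option.isSome = k - 1 := by
  intro k
  induction k with
  | zero =>
    intro S hS _ v hv
    rw [Finset.card_eq_zero] at hS
    subst hS
    simp at hv
  | succ k ih =>
    intro S hS hconn v hv
    rcases Nat.eq_zero_or_pos k with rfl | hk
    · -- |S| = 1
      obtain ⟨a, ha⟩ := Finset.card_eq_one.mp hS
      have hva : v = a := by rw [ha] at hv; simpa using hv
      subst hva
      exact ⟨[], rfl, rfl, by simp [ha], by simp, by simp, by simp, by simp⟩
    · -- |S| ≥ 2
      obtain ⟨u, huS, huv, hconn', x, hx, hadj⟩ :=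
        exists_noncut (by omega) hv hconn
      have hS' : (S.erase u).card = k := by rw [Finset.card_erase_of_mem huS]; omega
      have hv' : v ∈ S.erase u := Finset.mem_erase.mpr ⟨fun h => huv h.symm, hv⟩
      obtain ⟨c, hcur, hstk, hvs, hes, hcard, hlen, hcount⟩ := ih (S.erase u) hS' hconn' v hv'
      set nbr := nbrF hreg with hnbr
      set init : DSt V := ⟨v, [], [], [v]⟩ with hinit
      -- find a prefix of c ending at x
      have hxvs : x ∈ (runCode nbr init c).vs := by
        rw [← List.mem_toFinset, hvs]; exact hx
      have hsplit : ∃ c₁ c₂, c = c₁ ++ c₂ ∧ (runCode nbr init c₁).cur = x := by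
        rcases mem_vs_prefix nbr c init x hxvs with h0 | h
        · refine ⟨[], c, rfl, ?_⟩
          simp only [runCode_nil]
          have : x = v := by simpa [hinit] using h0
          simp [hinit, this]
        · exact h
      obtain ⟨c₁, c₂, rfl, hcur1⟩ := hsplit
      obtain ⟨j, hj⟩ := nbrF_surj hreg (hle x u hadj)
      set r₁ := runCode nbr init c₁ with hr₁
      set ρ := runCode nbr ⟨x, r₁.stack, [], []⟩ c₂ with hρ
      have hr₁eta : r₁ = ⟨x, r₁.stack, r₁.es, r₁.vs⟩ := by
        rw [← hcur1]
      -- old run factored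
      have hold : runCode nbr init (c₁ ++ c₂) =
          ⟨ρ.cur, ρ.stack, ρ.es ++ r₁.es, ρ.vs ++ r₁.vs⟩ := by
        rw [runCode_append, ← hr₁, hr₁eta, runCode_factor, ← hρ]
      -- new run
      have hnew : runCode nbr init (c₁ ++ some j :: none :: c₂) =
          ⟨ρ.cur, ρ.stack, ρ.es ++ (s(x, u) :: r₁.es), ρ.vs ++ (x :: u :: r₁.vs)⟩ := by
        rw [runCode_append, ← hr₁, runCode_cons, runCode_cons]
        have hstep1 : runStep nbr r₁ (some j) =
            ⟨u, x :: r₁.stack, s(x, u) :: r₁.es, u :: r₁.vs⟩ := by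
          show (⟨nbr r₁.cur j, r₁.cur :: r₁.stack, s(r₁.cur, nbr r₁.cur j) :: r₁.es,
            nbr r₁.cur j :: r₁.vs⟩ : DSt V) = _
          rw [hcur1, hnbr, hj]
        rw [hstep1]
        have hstep2 : runStep nbr (⟨u, x :: r₁.stack, s(x, u) :: r₁.es, u :: r₁.vs⟩ : DSt V)
            none = ⟨x, r₁.stack, s(x, u) :: r₁.es, x :: u :: r₁.vs⟩ := rfl
        rw [hstep2, runCode_factor, ← hρ]
      rw [hold] at hcur hstk hvs hes hcard
      simp only at hcur hstk hvs hes hcard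
      refine ⟨c₁ ++ some j :: none :: c₂, ?_, ?_, ?_, ?_, ?_, ?_, ?_⟩
      · rw [hnew]; exact hcur
      · rw [hnew]; exact hstk
      · rw [hnew]
        show (ρ.vs ++ (x :: u :: r₁.vs)).toFinset = S
        have hSins : S = insert u (S.erase u) := (Finset.insert_erase huS).symm
        rw [hSins, ← hvs]
        ext z
        have hiff : (z ∈ ρ.vs ∨ z ∈ r₁.vs) ↔ z ∈ S.erase u := by
          have := Finset.ext_iff.mp hvs z
          simpa [List.toFinset_append] using this
        simp only [List.toFinset_append, List.toFinset_cons, Finset.mem_union,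
          Finset.mem_insert, List.mem_toFinset]
        constructor
        · rintro (hz | hzx | hzu | hz)
          · exact Or.inr (hiff.mpr (hiff.mp (Or.inl hz)))
          · have : z ∈ S.erase u := by rw [hzx]; exact hx
            rcases hiff.mpr this with h | h
            · exact Or.inr (Or.inl h)
            · exact Or.inr (Or.inr h)
          · exact Or.inl hzu
          · exact Or.inr (Or.inr hz)
        · rintro (hzu | hz | hz)
          · exact Or.inr (Or.inr (Or.inl hzu))
          · exact Or.inl hz
          · exact Or.inr (Or.inr (Or.inr hz))
      · rw [hnew]
        intro e he
        simp only [List.mem_append, List.mem_cons] at he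
        have hSsub : ∀ z, z ∈ S.erase u → z ∈ S := fun z hz => (Finset.mem_erase.mp hz).2
        rcases he with he | rfl | he
        · obtain ⟨h1, h2⟩ := hes e (by simp [he])
          exact ⟨h1, fun z hz => hSsub z (h2 z hz)⟩
        · refine ⟨hadj, ?_⟩
          intro z hz
          rw [Sym2.mem_iff] at hz
          rcases hz with rfl | rfl
          · exact (Finset.mem_erase.mp hx).2
          · exact huS
        · obtain ⟨h1, h2⟩ := hes e (by simp [he])
          exact ⟨h1, fun z hz => hSsub z (h2 z hz)⟩
      · rw [hnew]
        show (ρ.es ++ (s(x, u) :: r₁.es)).toFinset.card = (k + 1) - 1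
        have hnotmem : s(x, u) ∉ (ρ.es ++ r₁.es).toFinset := by
          intro hmem
          have := (hes _ (by simpa using hmem)).2 u (by simp)
          exact (Finset.mem_erase.mp this).1 rfl
        have : (ρ.es ++ (s(x, u) :: r₁.es)).toFinset =
            insert s(x, u) ((ρ.es ++ r₁.es).toFinset) := by
          ext e
          simp only [List.toFinset_append, List.toFinset_cons, Finset.mem_union,
            Finset.mem_insert, List.mem_toFinset]
          tauto
        rw [this, Finset.card_insert_of_notMem hnotmem, hcard]
        omega
      · simp only [List.length_append, List.length_cons] at hlen ⊢
        omega
      · have hgoal : (c₁ ++ some j :: none :: c₂).countP Option.isSome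
            = c₁.countP Option.isSome + c₂.countP Option.isSome + 1 := by
          rw [List.countP_append, List.countP_cons, List.countP_cons]
          norm_num
          omega
        rw [List.countP_append] at hcount
        rw [hgoal]
        omega

end Tour

section DC
variable {V : Type*} [Fintype V] [DecidableEq V] (H : SimpleGraph V) [DecidableRel H.Adj]

/-- edges of `H` incident to `S` -/
def presInc (S : Finset V) : Finset (Sym2 V) :=
  H.edgeFinset.filter (fun e => ∃ z ∈ S, z ∈ e)

lemma epairs_eq_card (A B : Finset V) :
    epairs H A B = ((A ×ˢ B).filter fun ab => H.Adj ab.1 ab.2).card := by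
  rw [card_filter, Finset.sum_product]
  rfl

lemma epairs_split (S : Finset V) :
    epairs H S (univ : Finset V) = epairs H S S + epairs H S Sᶜ := by
  unfold epairs
  rw [← Finset.sum_add_distrib]
  apply Finset.sum_congr rfl
  intro a _
  rw [Finset.sum_add_sum_compl]

lemma epairs_swap (S : Finset V) :
    epairs H (univ : Finset V) S = epairs H S (univ : Finset V) := by
  unfold epairs
  rw [Finset.sum_comm]
  apply Finset.sum_congr rfl
  intro a _
  apply Finset.sum_congr rfl
  intro b _
  simp [SimpleGraph.adj_comm]

lemma epairs_le_presInc (S : Finset V) :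
    epairs H S S + 2 * epairs H S Sᶜ ≤ 2 * (presInc H S).card := by
  classical
  set P' := (((S ×ˢ (univ : Finset V)) ∪ ((univ : Finset V) ×ˢ S)).filter
    fun ab => H.Adj ab.1 ab.2) with hP'
  have hunion : P'.card + epairs H S S =
      epairs H S (univ : Finset V) + epairs H (univ : Finset V) S := by
    have hinter : (S ×ˢ (univ : Finset V)) ∩ ((univ : Finset V) ×ˢ S) = S ×ˢ S := by
      ext ⟨a, b⟩; simp [and_comm]
    rw [epairs_eq_card, epairs_eq_card, epairs_eq_card, hP', ← hinter,
      filter_union, filter_inter_distrib, card_union_add_card_inter]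
  have hcardP' : P'.card = epairs H S S + 2 * epairs H S Sᶜ := by
    have h1 := epairs_split H S
    have h2 := epairs_swap H S
    omega
  have hfiber : P'.card ≤ 2 * (presInc H S).card := by
    apply Finset.card_le_mul_card_image_of_maps_to (f := fun ab => s(ab.1, ab.2))
    · rintro ⟨a, b⟩ hab
      rw [hP', mem_filter] at hab
      obtain ⟨hmem, hadj⟩ := hab
      rw [presInc, mem_filter]
      refine ⟨by rwa [SimpleGraph.mem_edgeFinset, SimpleGraph.mem_edgeSet], ?_⟩
      simp only [mem_union, mem_product, mem_univ, and_true, true_and] at hmem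
      rcases hmem with h | h
      · exact ⟨a, h, Sym2.mem_mk_left _ _⟩
      · exact ⟨b, h, Sym2.mem_mk_right _ _⟩
    · intro e he
      induction e with
      | _ a₀ b₀ =>
        have hsub : (P'.filter fun ab => s(ab.1, ab.2) = s(a₀, b₀)) ⊆ {(a₀, b₀), (b₀, a₀)} := by
          intro ⟨a, b⟩ hab
          rw [mem_filter] at hab
          have := hab.2
          rw [Sym2.eq_iff] at this
          simp only [mem_insert, mem_singleton, Prod.mk.injEq]
          tauto
        calc (P'.filter fun ab => s(ab.1, ab.2) = s(a₀, b₀)).card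
            ≤ ({(a₀, b₀), (b₀, a₀)} : Finset (V × V)).card := card_le_card hsub
          _ ≤ 2 := (card_insert_le _ _).trans (by simp)
  omega

lemma presInc_card_le {G : SimpleGraph V} [DecidableRel G.Adj] {dd : ℕ}
    (hreg : G.IsRegularOfDegree dd) (W : Finset V) :
    (presInc G W).card ≤ dd * W.card := by
  have hsub : presInc G W ⊆ W.biUnion (fun z => G.incidenceFinset z) := by
    intro e he
    rw [presInc, mem_filter] at he
    obtain ⟨he1, z, hz, hze⟩ := he
    rw [mem_biUnion]
    exact ⟨z, hz, by rw [SimpleGraph.mem_incidenceFinset]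
                     exact ⟨SimpleGraph.mem_edgeFinset.mp he1, hze⟩⟩
  calc (presInc G W).card ≤ (W.biUnion (fun z => G.incidenceFinset z)).card := card_le_card hsub
    _ ≤ ∑ z ∈ W, (G.incidenceFinset z).card := card_biUnion_le
    _ = ∑ z ∈ W, dd := by
        apply Finset.sum_congr rfl
        intro z _
        rw [SimpleGraph.card_incidenceFinset_eq_degree]
        exact hreg z
    _ = dd * W.card := by rw [sum_const, smul_eq_mul, mul_comm]

end DC

section Numeric

lemma pow_self_le_exp_mul_factorial : ∀ m : ℕ, (m : ℝ) ^ m ≤ Real.exp 1 ^ m * m.factorial := by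
  intro m
  induction m with
  | zero => simp
  | succ m ih =>
    have hstep : ((m : ℝ) + 1) ^ m ≤ Real.exp 1 * (m : ℝ) ^ m := by
      rcases Nat.eq_zero_or_pos m with rfl | hm
      · simpa using Real.one_le_exp (by norm_num)
      · have hmpos : (0:ℝ) < m := by exact_mod_cast hm
        have h1 : (m : ℝ) + 1 ≤ (m : ℝ) * Real.exp (1 / m) := by
          have h := Real.add_one_le_exp (1 / (m:ℝ))
          have h2 := mul_le_mul_of_nonneg_left h hmpos.le
          have h3 : (m:ℝ) * (1 / m + 1) = 1 + m := by
            field_simp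
          linarith
        calc ((m : ℝ) + 1) ^ m ≤ ((m : ℝ) * Real.exp (1 / m)) ^ m := by
              apply pow_le_pow_left₀ (by positivity) h1
          _ = (m : ℝ) ^ m * Real.exp ((m : ℕ) * (1 / m)) := by
              rw [mul_pow, Real.exp_nat_mul]
          _ = (m : ℝ) ^ m * Real.exp 1 := by
              congr 1
              rw [mul_one_div, div_self (ne_of_gt hmpos)]
          _ = Real.exp 1 * (m : ℝ) ^ m := by ring
    calc ((m + 1 : ℕ) : ℝ) ^ (m + 1) = ((m:ℝ) + 1) * ((m:ℝ) + 1) ^ m := by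
          push_cast; rw [pow_succ]; ring
      _ ≤ ((m:ℝ) + 1) * (Real.exp 1 * (m : ℝ) ^ m) :=
          mul_le_mul_of_nonneg_left hstep (by positivity)
      _ ≤ ((m:ℝ) + 1) * (Real.exp 1 * (Real.exp 1 ^ m * m.factorial)) := by
          have := mul_le_mul_of_nonneg_left ih (Real.exp_pos 1).le
          exact mul_le_mul_of_nonneg_left this (by positivity)
      _ = Real.exp 1 ^ (m + 1) * (((m:ℝ) + 1) * m.factorial) := by
          rw [pow_succ]; ring
      _ = Real.exp 1 ^ (m + 1) * (m + 1).factorial := by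
          rw [Nat.factorial_succ]; push_cast; ring

lemma exp_one_pow_nine : (Real.exp 1) ^ 9 ≤ 9458 := by
  have h := Real.exp_one_lt_d9.le
  calc (Real.exp 1) ^ 9 ≤ (2.7182818286 : ℝ) ^ 9 :=
        pow_le_pow_left₀ (Real.exp_pos 1).le h 9
    _ ≤ 9458 := by norm_num

lemma choose_le_two_pow'' (n k : ℕ) : n.choose k ≤ 2 ^ n := by
  rcases le_or_gt k n with h | h
  · calc n.choose k ≤ ∑ m ∈ Finset.range (n + 1), n.choose m :=
        Finset.single_le_sum (fun _ _ => Nat.zero_le _) (Finset.mem_range.mpr (by omega))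
      _ = 2 ^ n := Nat.sum_range_choose n
  · rw [Nat.choose_eq_zero_of_lt h]; exact Nat.zero_le _

/-- the key per-size numeric estimate -/
lemma perk_bound (d k : ℕ) (hk : 1 ≤ k) :
    (Nat.choose (2 * (k - 1)) (k - 1) : ℝ) * (d : ℝ) ^ (k - 1)
      * (Nat.choose (d * k) (9 * k + 1) : ℝ) * (2 / (d : ℝ)) ^ (10 * k)
      ≤ (1 / 10) ^ k := by
  set E := Real.exp 1 with hE
  have hE1 : (1 : ℝ) ≤ E := Real.one_le_exp (by norm_num)
  have hEpos : (0 : ℝ) < E := Real.exp_pos 1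
  have hElt : E < 2.7182818286 := Real.exp_one_lt_d9
  rcases Nat.eq_zero_or_pos d with rfl | hd
  · have hz : ((2 : ℝ) / ((0 : ℕ) : ℝ)) ^ (10 * k) = 0 := by
      rw [Nat.cast_zero, div_zero]
      exact zero_pow (by omega)
    rw [hz, mul_zero]
    positivity
  · have hdR : (1 : ℝ) ≤ (d : ℝ) := by exact_mod_cast hd
    have hd0 : (d : ℝ) ≠ 0 := by intro h; rw [h] at hdR; linarith
    set r := 9 * k + 1 with hr
    have hfacpos : (0:ℝ) < (r.factorial : ℝ) := by exact_mod_cast r.factorial_pos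
    have hrR : (0:ℝ) < ((r : ℕ) : ℝ) := by
      have : 0 < r := by omega
      exact_mod_cast this
    have hfac : ((r : ℕ) : ℝ) ^ r ≤ E ^ r * r.factorial := pow_self_le_exp_mul_factorial r
    have hXnn : (0:ℝ) ≤ ((d * k : ℕ) : ℝ) := by positivity
    have hc2 : (Nat.choose (d * k) r : ℝ) ≤ ((d:ℝ) * E / 9) ^ r := by
      calc (Nat.choose (d * k) r : ℝ) ≤ ((d * k : ℕ) : ℝ) ^ r / r.factorial :=
            Nat.choose_le_pow_div r (d * k)
        _ ≤ (((d * k : ℕ) : ℝ) * E / r) ^ r := by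
            rw [div_pow, mul_pow, div_le_div_iff₀ hfacpos (by positivity)]
            calc ((d * k : ℕ) : ℝ) ^ r * ((r:ℕ):ℝ) ^ r
                ≤ ((d * k : ℕ) : ℝ) ^ r * (E ^ r * r.factorial) :=
                  mul_le_mul_of_nonneg_left hfac (by positivity)
              _ = ((d * k : ℕ) : ℝ) ^ r * E ^ r * r.factorial := by ring
        _ ≤ ((d:ℝ) * E / 9) ^ r := by
            apply pow_le_pow_left₀ (by positivity)
            rw [div_le_div_iff₀ hrR (by norm_num)]
            have hkr : ((d * k : ℕ) : ℝ) = (d:ℝ) * (k:ℝ) := by push_cast; ring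
            rw [hkr, hr]
            have h9 : ((9 * k + 1 : ℕ) : ℝ) = 9 * (k:ℝ) + 1 := by push_cast; ring
            rw [h9]
            have hdE : (0:ℝ) ≤ (d:ℝ) * E := by positivity
            nlinarith [hdE]
    have hc1 : (Nat.choose (2 * (k - 1)) (k - 1) : ℝ) ≤ 4 ^ (k - 1) := by
      have h := choose_le_two_pow'' (2 * (k - 1)) (k - 1)
      have h4 : (4:ℝ) ^ (k - 1) = 2 ^ (2 * (k - 1)) := by rw [pow_mul]; norm_num
      rw [h4]; exact_mod_cast h
    have hmain : (Nat.choose (2 * (k - 1)) (k - 1) : ℝ) * (d : ℝ) ^ (k - 1)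
        * (Nat.choose (d * k) r : ℝ) * (2 / (d : ℝ)) ^ (10 * k)
        ≤ 4 ^ (k - 1) * (d : ℝ) ^ (k - 1) * ((d:ℝ) * E / 9) ^ r * (2 / (d : ℝ)) ^ (10 * k) := by
      gcongr
    have hdpow : (d:ℝ) ^ (k - 1) * (d:ℝ) ^ r = (d:ℝ) ^ (10 * k) := by
      rw [← pow_add]; congr 1; omega
    have heq : (4:ℝ) ^ (k - 1) * (d : ℝ) ^ (k - 1) * ((d:ℝ) * E / 9) ^ r
        * (2 / (d : ℝ)) ^ (10 * k) = 4 ^ (k - 1) * (E / 9) ^ r * 2 ^ (10 * k) := by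
      have e1 : ((d:ℝ) * E / 9) ^ r = (d:ℝ) ^ r * (E / 9) ^ r := by
        rw [show (d:ℝ) * E / 9 = (d:ℝ) * (E / 9) by ring, mul_pow]
      have e2 : (2 / (d:ℝ)) ^ (10 * k) = 2 ^ (10 * k) * ((d:ℝ) ^ (10 * k))⁻¹ := by
        rw [div_pow, div_eq_mul_inv]
      rw [e1, e2]
      have : (4:ℝ) ^ (k - 1) * (d : ℝ) ^ (k - 1) * ((d:ℝ) ^ r * (E / 9) ^ r)
          * (2 ^ (10 * k) * ((d:ℝ) ^ (10 * k))⁻¹)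
          = 4 ^ (k - 1) * (E / 9) ^ r * 2 ^ (10 * k)
            * (((d:ℝ) ^ (k - 1) * (d:ℝ) ^ r) * ((d:ℝ) ^ (10 * k))⁻¹) := by ring
      rw [this, hdpow, mul_inv_cancel₀ (pow_ne_zero _ hd0), mul_one]
    have hfin : (4:ℝ) ^ (k - 1) * (E / 9) ^ r * 2 ^ (10 * k) ≤ (1 / 10) ^ k := by
      have hE9 : (E / 9) ^ 9 ≤ 9458 / 387420489 := by
        rw [div_pow]
        have h99 : ((9:ℝ)) ^ 9 = 387420489 := by norm_num
        rw [h99]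
        exact div_le_div₀ (by norm_num) exp_one_pow_nine (by norm_num) le_rfl
      have hbase : (4:ℝ) * ((E / 9) ^ 9 * 1024) ≤ 1 / 10 := by nlinarith [hE9]
      have e3 : (E / 9) ^ r = ((E / 9) ^ 9) ^ k * (E / 9) := by
        rw [hr, pow_succ, pow_mul]
      have e4 : (2:ℝ) ^ (10 * k) = 1024 ^ k := by
        rw [pow_mul]; norm_num
      have h45 : (4:ℝ) ^ (k - 1) ≤ 4 ^ k := pow_le_pow_right₀ (by norm_num) (by omega)
      have hE91 : E / 9 ≤ 1 := by linarith
      calc (4:ℝ) ^ (k - 1) * (E / 9) ^ r * 2 ^ (10 * k)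
          = 4 ^ (k - 1) * ((E / 9) ^ 9) ^ k * 1024 ^ k * (E / 9) := by
            rw [e3, e4]; ring
        _ ≤ 4 ^ k * ((E / 9) ^ 9) ^ k * 1024 ^ k * 1 := by
            gcongr
        _ = (4 * ((E / 9) ^ 9 * 1024)) ^ k := by
            rw [mul_pow, mul_pow]; ring
        _ ≤ (1 / 10) ^ k := pow_le_pow_left₀ (by positivity) hbase k
    calc (Nat.choose (2 * (k - 1)) (k - 1) : ℝ) * (d : ℝ) ^ (k - 1)
          * (Nat.choose (d * k) r : ℝ) * (2 / (d : ℝ)) ^ (10 * k)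
        ≤ 4 ^ (k - 1) * (d : ℝ) ^ (k - 1) * ((d:ℝ) * E / 9) ^ r * (2 / (d : ℝ)) ^ (10 * k) := hmain
      _ = 4 ^ (k - 1) * (E / 9) ^ r * 2 ^ (10 * k) := heq
      _ ≤ (1 / 10) ^ k := hfin

end Numeric

lemma geom_tail (K M : ℕ) : ∑ k ∈ Finset.Ico K M, (1/10:ℝ)^k ≤ (1/10)^K * (10/9) := by
  rw [Finset.sum_Ico_eq_sum_range]
  have h : ∀ i, (1/10:ℝ)^(K + i) = (1/10)^K * (1/10)^i := fun i => pow_add _ _ _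
  calc ∑ i ∈ Finset.range (M - K), (1/10:ℝ)^(K + i)
      = (1/10)^K * ∑ i ∈ Finset.range (M - K), (1/10:ℝ)^i := by
        rw [Finset.mul_sum]
        exact Finset.sum_congr rfl fun i _ => h i
    _ ≤ (1/10)^K * (10/9) := by
        apply mul_le_mul_of_nonneg_left _ (by positivity)
        have hgeom := geom_sum_eq (by norm_num : (1/10:ℝ) ≠ 1) (M - K)
        rw [hgeom]
        have hp : (0:ℝ) ≤ (1/10:ℝ)^(M - K) := by positivity
        have hp1 : (1/10:ℝ)^(M - K) ≤ 1 := by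
          apply pow_le_one₀ (by norm_num) (by norm_num)
        rw [div_le_iff_of_neg (by norm_num : (1/10:ℝ) - 1 < 0)]
        nlinarith

lemma log_ten_gt_one : (1:ℝ) < Real.log 10 := by
  rw [Real.lt_log_iff_exp_lt (by norm_num)]
  have := Real.exp_one_lt_d9
  linarith

lemma final_tendsto :
    Tendsto (fun n : ℕ => (n:ℝ) * ((1/10:ℝ)^(⌈Real.log n⌉₊) * (10/9))) atTop (nhds 0) := by
  have hg : Tendsto (fun n : ℕ =>
      (10/9:ℝ) * Real.exp ((1 - Real.log 10) * Real.log n)) atTop (nhds 0) := by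
    have h1 : Tendsto (fun n : ℕ => Real.log n) atTop atTop :=
      Real.tendsto_log_atTop.comp tendsto_natCast_atTop_atTop
    have h2 : Tendsto (fun n : ℕ => (1 - Real.log 10) * Real.log n) atTop atBot := by
      apply Tendsto.const_mul_atTop_of_neg _ h1
      have := log_ten_gt_one
      linarith
    have h3 := Real.tendsto_exp_atBot.comp h2
    have := h3.const_mul (10/9:ℝ)
    simpa using this
  apply squeeze_zero' (g := fun n : ℕ => (10/9:ℝ) * Real.exp ((1 - Real.log 10) * Real.log n))
  · filter_upwards with n
    positivity
  · filter_upwards [eventually_ge_atTop 1] with n hn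
    have hnpos : (0:ℝ) < n := by exact_mod_cast hn
    have hlog : Real.log n ≤ (⌈Real.log n⌉₊ : ℝ) := Nat.le_ceil _
    have hpow : ((1/10:ℝ))^(⌈Real.log n⌉₊) ≤ Real.exp (-(Real.log 10) * Real.log n) := by
      have e1 : ((1/10:ℝ))^(⌈Real.log n⌉₊) =
          Real.exp ((⌈Real.log n⌉₊ : ℝ) * Real.log (1/10)) := by
        rw [← Real.exp_log (by positivity : (0:ℝ) < (1/10:ℝ)^(⌈Real.log n⌉₊)),
          Real.log_pow]
      rw [e1]
      apply Real.exp_le_exp.mpr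
      have hlog110 : Real.log (1/10:ℝ) = -Real.log 10 := by
        rw [one_div, Real.log_inv]
      rw [hlog110]
      have h10 : (0:ℝ) < Real.log 10 := by linarith [log_ten_gt_one]
      nlinarith [hlog, h10]
    have hn_exp : (n:ℝ) = Real.exp (Real.log n) := (Real.exp_log hnpos).symm
    calc (n:ℝ) * ((1/10:ℝ)^(⌈Real.log n⌉₊) * (10/9))
        ≤ (n:ℝ) * (Real.exp (-(Real.log 10) * Real.log n) * (10/9)) := by
          apply mul_le_mul_of_nonneg_left _ (by positivity)
          apply mul_le_mul_of_nonneg_right hpow (by norm_num)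
      _ = (10/9:ℝ) * Real.exp ((1 - Real.log 10) * Real.log n) := by
          rw [show (1 - Real.log 10) * Real.log (n:ℝ)
              = Real.log (n:ℝ) + (-(Real.log 10) * Real.log (n:ℝ)) by ring,
            Real.exp_add, ← hn_exp]
          ring
  exact hg
section Assembly
open scoped ENNReal

lemma percGraph_true {V : Type*} {G : SimpleGraph V} [DecidableRel G.Adj] {ω : Sym2 V → Bool}
    {e : Sym2 V} (h : e ∈ (G.percGraph ω).edgeSet) : ω e = true := by
  induction e with
  | _ a b => exact ((G.percGraph ω).mem_edgeSet.mp h).2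

lemma union_bound (n dd : ℕ) (hn : 2 ≤ n) (G : SimpleGraph (Fin n)) [DecidableRel G.Adj]
    (hreg : G.IsRegularOfDegree dd) (p : ℝ) (hp0 : 0 ≤ p) (hp2 : p ≤ 2 / (dd : ℝ)) :
    percMeasure (Fin n) p
      {ω | ∀ S : Finset (Fin n), Real.log n ≤ (S.card : ℝ) →
            (SimpleGraph.induce (↑S) (G.percGraph ω)).Connected →
            epairs (G.percGraph ω) S S + 2 * epairs (G.percGraph ω) S Sᶜ
              < 20 * S.card}ᶜ
      ≤ ENNReal.ofReal ((n:ℝ) * ((1/10:ℝ)^(⌈Real.log n⌉₊) * (10/9))) := by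
  classical
  set μ := percMeasure (Fin n) p with hμ
  set q := min (ENNReal.ofReal p) 1 with hq
  set nbr := nbrF hreg with hnbr
  have hn1 : (1:ℝ) < n := by exact_mod_cast hn
  have hlogpos : 0 < Real.log n := Real.log_pos hn1
  set Ks : Finset ℕ := (Finset.range (n+1)).filter (fun k => Real.log n ≤ (k:ℝ)) with hKs
  set runS : ∀ (k : ℕ), (Fin n) × (Fin (2*(k-1)) → Option (Fin dd)) → DSt (Fin n) :=
    fun k vm => runCode nbr ⟨vm.1, [], [], [vm.1]⟩ (List.ofFn vm.2) with hrunSdef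
  set Pset : ∀ k : ℕ, Finset ((Fin n) × (Fin (2*(k-1)) → Option (Fin dd))) :=
    fun k => (Finset.univ ×ˢ Finset.univ).filter (fun vm =>
      (Finset.univ.filter fun i => ((vm.2 i).isSome = true)).card = k - 1 ∧
      (runS k vm).vs.toFinset.card = k ∧
      (runS k vm).es.toFinset.card = k - 1) with hPset
  set Fset : ∀ (k : ℕ) (vm : (Fin n) × (Fin (2*(k-1)) → Option (Fin dd))),
      Finset (Finset (Sym2 (Fin n))) := fun k vm =>
    ((presInc G ((runS k vm).vs.toFinset)).powersetCard (9*k+1)).filter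
      (fun F => Disjoint F ((runS k vm).es.toFinset)) with hFset
  set Cyl : Finset (Sym2 (Fin n)) → Set (Sym2 (Fin n) → Bool) :=
    fun D => {ω | ∀ e ∈ D, ω e = true} with hCyl
  set U : Set (Sym2 (Fin n) → Bool) :=
    ⋃ k ∈ Ks, ⋃ vm ∈ Pset k, ⋃ F ∈ Fset k vm, Cyl ((runS k vm).es.toFinset ∪ F) with hU
  have hk1ofKs : ∀ k ∈ Ks, 1 ≤ k := by
    intro k hk
    have := (Finset.mem_filter.mp hk).2
    by_contra h
    push_neg at h
    interval_cases k
    · simp at this; linarith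
  -- Part 1 : coverage
  have hsub : {ω : Sym2 (Fin n) → Bool | ∀ S : Finset (Fin n), Real.log n ≤ (S.card : ℝ) →
      (SimpleGraph.induce (↑S) (G.percGraph ω)).Connected →
      epairs (G.percGraph ω) S S + 2 * epairs (G.percGraph ω) S Sᶜ < 20 * S.card}ᶜ ⊆ U := by
    intro ω hω
    simp only [Set.mem_compl_iff, Set.mem_setOf_eq, not_forall, not_lt] at hω
    obtain ⟨S, hcardS, hconn, hbig⟩ := hω
    set H := G.percGraph ω with hH
    set k := S.card with hk
    have hkpos : 1 ≤ k := by
      rcases Nat.eq_zero_or_pos k with h0 | h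
      · exfalso
        rw [h0] at hcardS
        norm_num at hcardS
        linarith
      · exact h
    have hkKs : k ∈ Ks := by
      rw [hKs, Finset.mem_filter, Finset.mem_range]
      refine ⟨?_, hcardS⟩
      have := Finset.card_le_univ S
      rw [Fintype.card_fin] at this
      omega
    have hconn' := induced_to_aux hconn
    have hSne : S.Nonempty := Finset.card_pos.mp (by omega)
    obtain ⟨v, hv⟩ := hSne
    have hle : ∀ a b : Fin n, H.Adj a b → G.Adj a b := fun a b h => h.1
    obtain ⟨c, hcur, hstk, hvs, hes, hcard, hlen, hcount⟩ :=
      tour_exists hreg H hle k S hk.symm hconn' v hv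
    have hlen' : ∀ i : Fin (2*(k-1)), (i : ℕ) < c.length := fun i => by rw [hlen]; exact i.2
    set m : Fin (2*(k-1)) → Option (Fin dd) := fun i => c.get ⟨(i:ℕ), hlen' i⟩ with hm
    have hofn : List.ofFn m = c := by
      apply List.ext_getElem
      · simp [hlen]
      · intro i h1 h2
        simp [hm, List.get_eq_getElem]
    have hrunS : runS k (v, m) = runCode nbr ⟨v, [], [], [v]⟩ c := by
      rw [hrunSdef]
      simp only
      rw [hofn]
    have hPmem : (v, m) ∈ Pset k := by
      rw [hPset, Finset.mem_filter]
      refine ⟨Finset.mem_product.mpr ⟨Finset.mem_univ _, Finset.mem_univ _⟩, ?_, ?_, ?_⟩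
      · have hcc := countP_ofFn m (fun o => o.isSome)
        rw [hofn] at hcc
        rw [← hcc]
        exact hcount
      · rw [hrunS, hvs]
      · rw [hrunS]; exact hcard
    have hpres : 10 * k ≤ (presInc H S).card := by
      have h2 := epairs_le_presInc (G.percGraph ω) S
      have h3 : presInc H S = presInc (G.percGraph ω) S := rfl
      rw [h3]
      have h4 : epairs H S S = epairs (G.percGraph ω) S S := rfl
      have h5 : epairs H S Sᶜ = epairs (G.percGraph ω) S Sᶜ := rfl
      omega
    have hsd : 9*k+1 ≤ ((presInc H S) \ (runS k (v,m)).es.toFinset).card := by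
      have h1 := Finset.le_card_sdiff ((runS k (v,m)).es.toFinset) (presInc H S)
      have h2 : (runS k (v,m)).es.toFinset.card = k - 1 := by rw [hrunS]; exact hcard
      omega
    obtain ⟨F, hFsub, hFcard⟩ := Finset.exists_subset_card_eq hsd
    have hFpres : F ⊆ presInc H S := hFsub.trans (Finset.sdiff_subset)
    have hHG : H ≤ G := fun {a b} h => h.1
    have hFmem : F ∈ Fset k (v, m) := by
      rw [hFset, Finset.mem_filter]
      constructor
      · rw [Finset.mem_powersetCard]
        refine ⟨?_, hFcard⟩
        rw [hrunS, hvs]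
        intro e he
        have hmem := hFpres he
        simp only [presInc, Finset.mem_filter] at hmem ⊢
        refine ⟨?_, hmem.2⟩
        rw [SimpleGraph.mem_edgeFinset] at hmem ⊢
        exact SimpleGraph.edgeSet_mono hHG hmem.1
      · rw [Finset.disjoint_left]
        intro e heF
        exact (Finset.mem_sdiff.mp (hFsub heF)).2
    have hωcyl : ω ∈ Cyl ((runS k (v,m)).es.toFinset ∪ F) := by
      intro e he
      rw [Finset.mem_union] at he
      have heH : e ∈ H.edgeSet := by
        rcases he with he | he
        · rw [hrunS] at he
          exact (hes e (List.mem_toFinset.mp he)).1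
        · have := hFpres he
          simp only [presInc, Finset.mem_filter] at this
          exact SimpleGraph.mem_edgeFinset.mp this.1
      exact percGraph_true heH
    rw [hU]
    refine Set.mem_iUnion₂.mpr ⟨k, hkKs, Set.mem_iUnion₂.mpr ⟨(v,m), hPmem,
      Set.mem_iUnion₂.mpr ⟨F, hFmem, hωcyl⟩⟩⟩
  -- Part 2 : measure bound
  have hq2 : q ≤ ENNReal.ofReal (2 / (dd:ℝ)) :=
    le_trans (min_le_left _ _) (ENNReal.ofReal_le_ofReal hp2)
  have hUb : μ U ≤ ENNReal.ofReal ((n:ℝ) * ((1/10:ℝ)^(⌈Real.log n⌉₊) * (10/9))) := by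
    have hperk : ∀ k ∈ Ks,
        ∑ vm ∈ Pset k, ∑ F ∈ Fset k vm, μ (Cyl ((runS k vm).es.toFinset ∪ F))
          ≤ ENNReal.ofReal ((n:ℝ) * (1/10:ℝ)^k) := by
      intro k hkKs
      have hk1 : 1 ≤ k := hk1ofKs k hkKs
      have hterm : ∀ vm ∈ Pset k, ∀ F ∈ Fset k vm,
          μ (Cyl ((runS k vm).es.toFinset ∪ F)) = q^(10*k) := by
        intro vm hvm F hF
        have hdisj : Disjoint ((runS k vm).es.toFinset) F :=
          ((Finset.mem_filter.mp hF).2).symm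
        have h1 := (Finset.mem_filter.mp hvm).2.2.2
        have h2 := (Finset.mem_powersetCard.mp (Finset.mem_filter.mp hF).1).2
        have hcardD : ((runS k vm).es.toFinset ∪ F).card = 10*k := by
          rw [Finset.card_union_of_disjoint hdisj]
          omega
        calc μ (Cyl ((runS k vm).es.toFinset ∪ F))
            = q ^ ((runS k vm).es.toFinset ∪ F).card := percMeasure_cyl p _
          _ = q ^ (10*k) := by rw [hcardD]
      have hFsum : ∀ vm ∈ Pset k,
          ∑ F ∈ Fset k vm, μ (Cyl ((runS k vm).es.toFinset ∪ F))
            ≤ (Nat.choose (dd*k) (9*k+1) : ℝ≥0∞) * q^(10*k) := by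
        intro vm hvm
        rw [Finset.sum_congr rfl (hterm vm hvm), Finset.sum_const, nsmul_eq_mul]
        apply mul_le_mul_left
        have hc : (Fset k vm).card ≤ Nat.choose (dd*k) (9*k+1) := by
          calc (Fset k vm).card
              ≤ ((presInc G ((runS k vm).vs.toFinset)).powersetCard (9*k+1)).card :=
                Finset.card_le_card (Finset.filter_subset _ _)
            _ = Nat.choose ((presInc G ((runS k vm).vs.toFinset)).card) (9*k+1) :=
                Finset.card_powersetCard _ _
            _ ≤ Nat.choose (dd*k) (9*k+1) := by
                apply Nat.choose_le_choose
                have h3 := presInc_card_le hreg ((runS k vm).vs.toFinset)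
                have hvsc := (Finset.mem_filter.mp hvm).2.2.1
                rw [hvsc] at h3
                exact h3
        exact_mod_cast hc
      have hPcard : (Pset k).card ≤ n * (Nat.choose (2*(k-1)) (k-1) * dd^(k-1)) := by
        have hsubP : Pset k ⊆ Finset.univ ×ˢ
            ((Finset.univ : Finset (Fin (2*(k-1)) → Option (Fin dd))).filter
              (fun m => (Finset.univ.filter fun i => ((m i).isSome = true)).card = k - 1)) := by
          intro vm hvm
          rw [hPset, Finset.mem_filter] at hvm
          rw [Finset.mem_product]
          exact ⟨Finset.mem_univ _, Finset.mem_filter.mpr ⟨Finset.mem_univ _, hvm.2.1⟩⟩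
        calc (Pset k).card ≤ _ := Finset.card_le_card hsubP
          _ = n * _ := by rw [Finset.card_product, Finset.card_univ, Fintype.card_fin]
          _ ≤ n * (Nat.choose (2*(k-1)) (k-1) * dd^(k-1)) := by
              apply Nat.mul_le_mul_left
              exact codes_card_le (2*(k-1)) (k-1) dd
      calc ∑ vm ∈ Pset k, ∑ F ∈ Fset k vm, μ (Cyl ((runS k vm).es.toFinset ∪ F))
          ≤ ∑ _vm ∈ Pset k, (Nat.choose (dd*k) (9*k+1) : ℝ≥0∞) * q^(10*k) :=
            Finset.sum_le_sum hFsum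
        _ = ((Pset k).card : ℝ≥0∞) * ((Nat.choose (dd*k) (9*k+1) : ℝ≥0∞) * q^(10*k)) := by
            rw [Finset.sum_const, nsmul_eq_mul]
        _ ≤ ((n * (Nat.choose (2*(k-1)) (k-1) * dd^(k-1)) : ℕ) : ℝ≥0∞)
              * ((Nat.choose (dd*k) (9*k+1) : ℝ≥0∞) * q^(10*k)) := by
            apply mul_le_mul_left
            exact_mod_cast hPcard
        _ ≤ ((n * (Nat.choose (2*(k-1)) (k-1) * dd^(k-1)) : ℕ) : ℝ≥0∞)
              * ((Nat.choose (dd*k) (9*k+1) : ℝ≥0∞)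
                * ENNReal.ofReal ((2/(dd:ℝ))^(10*k))) := by
            apply mul_le_mul_right
            apply mul_le_mul_right
            calc q^(10*k) ≤ (ENNReal.ofReal (2/(dd:ℝ)))^(10*k) := pow_le_pow_left' hq2 _
              _ = ENNReal.ofReal ((2/(dd:ℝ))^(10*k)) := by
                  rw [← ENNReal.ofReal_pow (by positivity)]
        _ = ENNReal.ofReal (((n * (Nat.choose (2*(k-1)) (k-1) * dd^(k-1)) : ℕ) : ℝ)
              * ((Nat.choose (dd*k) (9*k+1) : ℝ) * (2/(dd:ℝ))^(10*k))) := by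
            rw [ENNReal.ofReal_mul (by positivity), ENNReal.ofReal_mul (by positivity)]
            rw [ENNReal.ofReal_natCast, ENNReal.ofReal_natCast]
        _ ≤ ENNReal.ofReal ((n:ℝ) * (1/10:ℝ)^k) := by
            apply ENNReal.ofReal_le_ofReal
            have hpk := perk_bound dd k hk1
            calc ((n * (Nat.choose (2*(k-1)) (k-1) * dd^(k-1)) : ℕ) : ℝ)
                  * ((Nat.choose (dd*k) (9*k+1) : ℝ) * (2/(dd:ℝ))^(10*k))
                = (n:ℝ) * ((Nat.choose (2*(k-1)) (k-1) : ℝ) * (dd:ℝ)^(k-1)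
                    * (Nat.choose (dd*k) (9*k+1) : ℝ) * (2/(dd:ℝ))^(10*k)) := by
                  push_cast
                  ring
              _ ≤ (n:ℝ) * (1/10:ℝ)^k := by
                  apply mul_le_mul_of_nonneg_left hpk (Nat.cast_nonneg n)
    calc μ U ≤ ∑ k ∈ Ks, μ (⋃ vm ∈ Pset k, ⋃ F ∈ Fset k vm,
          Cyl ((runS k vm).es.toFinset ∪ F)) := measure_biUnion_finset_le _ _
      _ ≤ ∑ k ∈ Ks, ∑ vm ∈ Pset k, μ (⋃ F ∈ Fset k vm,
          Cyl ((runS k vm).es.toFinset ∪ F)) :=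
          Finset.sum_le_sum (fun k _ => measure_biUnion_finset_le _ _)
      _ ≤ ∑ k ∈ Ks, ∑ vm ∈ Pset k, ∑ F ∈ Fset k vm,
          μ (Cyl ((runS k vm).es.toFinset ∪ F)) :=
          Finset.sum_le_sum (fun k _ => Finset.sum_le_sum
            (fun vm _ => measure_biUnion_finset_le _ _))
      _ ≤ ∑ k ∈ Ks, ENNReal.ofReal ((n:ℝ) * (1/10:ℝ)^k) := Finset.sum_le_sum hperk
      _ = ENNReal.ofReal (∑ k ∈ Ks, (n:ℝ) * (1/10:ℝ)^k) :=
          (ENNReal.ofReal_sum_of_nonneg (fun k _ => by positivity)).symm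
      _ ≤ ENNReal.ofReal ((n:ℝ) * ((1/10:ℝ)^(⌈Real.log n⌉₊) * (10/9))) := by
          apply ENNReal.ofReal_le_ofReal
          rw [← Finset.mul_sum]
          apply mul_le_mul_of_nonneg_left _ (Nat.cast_nonneg n)
          calc ∑ k ∈ Ks, (1/10:ℝ)^k
              ≤ ∑ k ∈ Finset.Ico (⌈Real.log n⌉₊) (n+1), (1/10:ℝ)^k := by
                apply Finset.sum_le_sum_of_subset_of_nonneg
                · intro k hk
                  rw [hKs, Finset.mem_filter, Finset.mem_range] at hk
                  rw [Finset.mem_Ico]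
                  exact ⟨Nat.ceil_le.mpr hk.2, hk.1⟩
                · intros
                  positivity
            _ ≤ (1/10:ℝ)^(⌈Real.log n⌉₊) * (10/9) := geom_tail _ _
  exact le_trans (measure_mono hsub) hUb

end Assembly
theorem stmt4 :
    ∀ (G : ∀ n : ℕ, SimpleGraph (Fin n)) (_ : ∀ n, DecidableRel (G n).Adj)
      (d : ℕ → ℕ) (p : ℕ → ℝ),
    (∀ n, (G n).IsRegularOfDegree (d n)) →
    (∀ n, 0 ≤ p n ∧ p n ≤ 2 / (d n : ℝ)) →
    Tendsto (fun n => percMeasure (Fin n) (p n)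
      {ω | ∀ S : Finset (Fin n), Real.log n ≤ (S.card : ℝ) →
            (SimpleGraph.induce (↑S) ((G n).percGraph ω)).Connected →
            epairs ((G n).percGraph ω) S S + 2 * epairs ((G n).percGraph ω) S Sᶜ
              < 20 * S.card})
      atTop (nhds 1) := by
  intro G inst d p hreg hp
  set B : ℕ → ENNReal :=
    fun n => ENNReal.ofReal ((n:ℝ) * ((1/10:ℝ)^(⌈Real.log n⌉₊) * (10/9))) with hB
  have hBto : Tendsto B atTop (nhds 0) := by
    have h1 := ENNReal.tendsto_ofReal (a := 0) final_tendsto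
    simpa only [ENNReal.ofReal_zero] using h1
  have hlow : Tendsto (fun n => 1 - B n) atTop (nhds 1) := by
    have h2 := ENNReal.Tendsto.sub (tendsto_const_nhds (x := (1:ENNReal))) hBto
      (Or.inl (by norm_num))
    simpa using h2
  apply tendsto_of_tendsto_of_tendsto_of_le_of_le' hlow tendsto_const_nhds
  · filter_upwards [eventually_ge_atTop 2] with n hn
    have hub := @union_bound n (d n) hn (G n) (inst n) (hreg n) (p n) (hp n).1 (hp n).2
    have hcompl := prob_compl_eq_one_sub (μ := percMeasure (Fin n) (p n))
      (measurableSet_all ({ω | ∀ S : Finset (Fin n), Real.log n ≤ (S.card : ℝ) →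
        (SimpleGraph.induce (↑S) ((G n).percGraph ω)).Connected →
        epairs ((G n).percGraph ω) S S + 2 * epairs ((G n).percGraph ω) S Sᶜ
          < 20 * S.card}ᶜ))
    rw [compl_compl] at hcompl
    calc 1 - B n ≤ 1 - percMeasure (Fin n) (p n)
          {ω | ∀ S : Finset (Fin n), Real.log n ≤ (S.card : ℝ) →
            (SimpleGraph.induce (↑S) ((G n).percGraph ω)).Connected →
            epairs ((G n).percGraph ω) S S + 2 * epairs ((G n).percGraph ω) S Sᶜ
              < 20 * S.card}ᶜ := tsub_le_tsub_left hub 1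
      _ = _ := hcompl.symm
  · filter_upwards with n
    exact prob_le_one
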